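/- arXiv:math/0607027 — 2 statements merged into one kernel-verified Lean document; each statement's English description precedes it below -/
import Mathlib

section
/- The function a₀¹(z) := ∫₀^∞ s e^{-s²/2} / √(s² + z²) ds satisfies a₀¹(z) ≤ a₀¹(0) = √(π/2) for all z ∈ ℝ, and a₀¹(z) · |z| → 1 as |z| → ∞. -/
open MeasureTheory Real Filter

lemma aux_exp_eq (s : ℝ) : Real.exp (-s ^ 2 / 2) = Real.exp (-(1/2) * s ^ 2) := by
  ring_nf

lemma aux_sqrt_ge_left (s z : ℝ) (hs : 0 ≤ s) : s ≤ Real.sqrt (s ^ 2 + z ^ 2) := by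
  have := Real.sqrt_le_sqrt (le_add_of_nonneg_right (sq_nonneg z) : s ^ 2 ≤ s ^ 2 + z ^ 2)
  rwa [Real.sqrt_sq hs] at this

lemma aux_sqrt_ge_right (s z : ℝ) : |z| ≤ Real.sqrt (s ^ 2 + z ^ 2) := by
  have := Real.sqrt_le_sqrt (le_add_of_nonneg_left (sq_nonneg s) : z ^ 2 ≤ s ^ 2 + z ^ 2)
  rwa [Real.sqrt_sq_eq_abs] at this

lemma aux_int_one : ∫ s in Set.Ioi (0 : ℝ), s * Real.exp (-s ^ 2 / 2) = 1 := by
  have hint : IntegrableOn (fun s : ℝ => s * Real.exp (-s ^ 2 / 2)) (Set.Ioi 0) := by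
    simp_rw [aux_exp_eq]
    exact (integrable_mul_exp_neg_mul_sq one_half_pos).integrableOn
  have A : ∀ x : ℝ, HasDerivAt (fun x : ℝ => -Real.exp (-x ^ 2 / 2))
      (x * Real.exp (-x ^ 2 / 2)) x := by
    intro x
    have h : HasDerivAt (fun x : ℝ => -x ^ 2 / 2) (-x) x := by
      have := (hasDerivAt_pow 2 x).neg.div_const 2
      exact this.congr_deriv (by simp; ring)
    have := (h.exp).neg
    exact this.congr_deriv (by ring)
  have B : Tendsto (fun x : ℝ => -Real.exp (-x ^ 2 / 2)) atTop (nhds 0) := by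
    rw [show (0:ℝ) = -0 by ring]
    refine Tendsto.neg ?_
    apply Real.tendsto_exp_atBot.comp
    apply Filter.Tendsto.atBot_div_const two_pos
    exact tendsto_neg_atBot_iff.mpr (tendsto_pow_atTop two_ne_zero)
  have := integral_Ioi_of_hasDerivAt_of_tendsto' (fun x _ => A x) hint B
  rw [this]; simp

lemma aux_ratio_tendsto (s : ℝ) (hs : 0 < s) :
    Tendsto (fun z : ℝ => |z| / Real.sqrt (s ^ 2 + z ^ 2)) (cocompact ℝ) (nhds 1) := by
  have habs : Tendsto (fun z : ℝ => |z|) (cocompact ℝ) atTop := by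
    exact (tendsto_norm_cocompact_atTop (E := ℝ)).congr (fun z => Real.norm_eq_abs z)
  have hz2 : Tendsto (fun z : ℝ => s ^ 2 / z ^ 2 + 1) (cocompact ℝ) (nhds 1) := by
    have h1 : Tendsto (fun z : ℝ => z ^ 2) (cocompact ℝ) atTop :=
      ((tendsto_pow_atTop two_ne_zero).comp habs).congr (fun z => sq_abs z)
    have h2 : Tendsto (fun z : ℝ => s ^ 2 / z ^ 2) (cocompact ℝ) (nhds 0) := by
      simpa [div_eq_mul_inv] using (tendsto_inv_atTop_zero.comp h1).const_mul (s ^ 2)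
    simpa using h2.add tendsto_const_nhds
  have hsqrt : Tendsto (fun z : ℝ => (Real.sqrt (s ^ 2 / z ^ 2 + 1))⁻¹)
      (cocompact ℝ) (nhds 1) := by
    have h3 : Tendsto (fun z : ℝ => Real.sqrt (s ^ 2 / z ^ 2 + 1)) (cocompact ℝ) (nhds 1) := by
      simpa [Function.comp_def] using (Real.continuous_sqrt.tendsto 1).comp hz2
    simpa using h3.inv₀ one_ne_zero
  refine hsqrt.congr' ?_
  filter_upwards [habs.eventually_ge_atTop 1] with z hz
  have hzpos : (0:ℝ) < |z| := lt_of_lt_of_le one_pos hz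
  have key : Real.sqrt (s ^ 2 + z ^ 2) = |z| * Real.sqrt (s ^ 2 / z ^ 2 + 1) := by
    rw [← Real.sqrt_sq (abs_nonneg z), ← Real.sqrt_mul (sq_nonneg |z|), sq_abs]
    congr 1
    have : z ^ 2 ≠ 0 := pow_ne_zero 2 (abs_pos.mp hzpos)
    rw [mul_add, mul_div_cancel₀ _ this]; ring
  rw [key, ← div_div, div_self (ne_of_gt hzpos), one_div]

theorem a0_one_properties
    (a : ℝ → ℝ)
    (ha : ∀ z : ℝ, a z = ∫ s in Set.Ioi (0 : ℝ),
        s * Real.exp (-s ^ 2 / 2) / Real.sqrt (s ^ 2 + z ^ 2)) :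
    (∀ z : ℝ, a z ≤ a 0) ∧
    a 0 = Real.sqrt (π / 2) ∧
    Tendsto (fun z : ℝ => a z * |z|) (cocompact ℝ) (nhds 1) := by
  have ha0 : a 0 = ∫ s in Set.Ioi (0 : ℝ), Real.exp (-s ^ 2 / 2) := by
    rw [ha 0]
    apply setIntegral_congr_fun measurableSet_Ioi
    intro s hs
    simp only [Set.mem_Ioi] at hs
    have h0 : Real.sqrt (s ^ 2 + (0:ℝ) ^ 2) = s := by
      rw [show s ^ 2 + (0:ℝ) ^ 2 = s ^ 2 by ring, Real.sqrt_sq hs.le]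
    simp only [h0]
    field_simp
  have hgi : IntegrableOn (fun s : ℝ => Real.exp (-s ^ 2 / 2)) (Set.Ioi 0) := by
    simp_rw [aux_exp_eq]
    exact (integrable_exp_neg_mul_sq one_half_pos).integrableOn
  refine ⟨?_, ?_, ?_⟩
  · intro z
    rw [ha z, ha0]
    apply integral_mono_of_nonneg
    · filter_upwards [ae_restrict_mem measurableSet_Ioi] with s hs
      simp only [Set.mem_Ioi] at hs
      positivity
    · exact hgi
    · filter_upwards [ae_restrict_mem measurableSet_Ioi] with s hs
      simp only [Set.mem_Ioi] at hs
      have hsq := aux_sqrt_ge_left s z hs.le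
      have hpos : 0 < Real.sqrt (s ^ 2 + z ^ 2) := lt_of_lt_of_le hs hsq
      rw [div_le_iff₀ hpos]
      have he := Real.exp_pos (-s ^ 2 / 2)
      nlinarith [mul_le_mul_of_nonneg_left hsq he.le]
  · rw [ha0]
    have h := integral_gaussian_Ioi (1/2)
    simp_rw [aux_exp_eq]
    rw [h, show π / (1/2:ℝ) = 2 ^ 2 * (π / 2) by ring,
      Real.sqrt_mul (by positivity), Real.sqrt_sq (by norm_num : (0:ℝ) ≤ 2)]
    ring
  · have key : Tendsto (fun z : ℝ => ∫ s in Set.Ioi (0 : ℝ),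
        s * Real.exp (-s ^ 2 / 2) / Real.sqrt (s ^ 2 + z ^ 2) * |z|)
        (cocompact ℝ) (nhds 1) := by
      haveI : (cocompact ℝ).IsCountablyGenerated := by
        rw [cocompact_eq_atBot_atTop]; infer_instance
      rw [← aux_int_one]
      apply tendsto_integral_filter_of_dominated_convergence
        (fun s => s * Real.exp (-s ^ 2 / 2))
      · filter_upwards with z
        have m1 : Measurable fun s : ℝ => s * Real.exp (-s ^ 2 / 2) := by fun_prop
        have m2 : Measurable fun s : ℝ => Real.sqrt (s ^ 2 + z ^ 2) := by fun_prop
        exact ((m1.div m2).mul_const |z|).aestronglyMeasurable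
      · filter_upwards with z
        filter_upwards [ae_restrict_mem measurableSet_Ioi] with s hs
        simp only [Set.mem_Ioi] at hs
        have hsq := aux_sqrt_ge_right s z
        have hpos : 0 < Real.sqrt (s ^ 2 + z ^ 2) :=
          lt_of_lt_of_le (aux_sqrt_ge_left s z hs.le |> lt_of_lt_of_le hs) le_rfl
        rw [Real.norm_eq_abs, abs_of_nonneg (by positivity), div_mul_eq_mul_div,
          div_le_iff₀ hpos]
        have he := Real.exp_pos (-s ^ 2 / 2)
        nlinarith [mul_le_mul_of_nonneg_left hsq (mul_pos hs he).le]
      · simp_rw [aux_exp_eq]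
        exact (integrable_mul_exp_neg_mul_sq one_half_pos).integrableOn
      · filter_upwards [ae_restrict_mem measurableSet_Ioi] with s hs
        simp only [Set.mem_Ioi] at hs
        have := (aux_ratio_tendsto s hs).const_mul (s * Real.exp (-s ^ 2 / 2))
        simp only [mul_one] at this
        refine this.congr fun z => by ring
    refine key.congr' ?_
    filter_upwards with z
    rw [ha z, ← integral_mul_const]
end

section
/- For each integer ℓ ≥ 0 and B > 0, define a_ℓ^B(z) := (B^{ℓ+1}/(2^ℓ ℓ!)) ∫₀^∞ s^{2ℓ+1} e^{-B s²/2} / √(s² + z²) ds. Then for every ℓ ≥ 1 and every z ∈ ℝ, a_ℓ^B(z) ≤ a_{ℓ−1}^B(z). -/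
open MeasureTheory Real

lemma integral_odd_pow_gauss {B : ℝ} (hB : 0 < B) (k : ℕ) :
    ∫ s in Set.Ioi (0:ℝ), s ^ (2*k+1) * Real.exp (-B * s^2 / 2) =
      2 ^ k * (Nat.factorial k) / B ^ (k+1) := by
  have h := integral_rpow_mul_exp_neg_mul_rpow (p := 2) (q := (2*k+1 : ℝ)) (b := B/2)
    two_pos (by have := Nat.cast_nonneg (α := ℝ) k; linarith) (by positivity)
  have hcong : ∀ x ∈ Set.Ioi (0:ℝ),
      x ^ (2*k+1) * Real.exp (-B * x^2 / 2)
        = x ^ ((2*k+1 : ℕ) : ℝ) * Real.exp (-(B/2) * x ^ (2:ℝ)) := by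
    intro x hx
    rw [Real.rpow_natCast, Real.rpow_two]
    ring_nf
  rw [setIntegral_congr_fun measurableSet_Ioi hcong]
  push_cast
  rw [h]
  have h1 : (-(2 * (k:ℝ) + 1 + 1) / 2) = -((k:ℝ)+1) := by ring
  have h2 : ((2 * (k:ℝ) + 1 + 1) / 2) = (k:ℝ)+1 := by ring
  rw [h1, h2]
  have h3 : Real.Gamma ((k:ℝ)+1) = Nat.factorial k := by
    exact_mod_cast Real.Gamma_nat_eq_factorial k
  rw [h3, Real.rpow_neg (by positivity), show ((k:ℝ)+1) = ((k+1 : ℕ) : ℝ) by push_cast; ring,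
    Real.rpow_natCast]
  rw [div_pow]
  field_simp
  ring

lemma integrableOn_pow_gauss {B : ℝ} (hB : 0 < B) (n : ℕ) :
    IntegrableOn (fun s : ℝ => s ^ n * Real.exp (-B * s ^ 2 / 2)) (Set.Ioi 0) := by
  have h := integrableOn_rpow_mul_exp_neg_mul_sq (b := B/2) (by linarith) (s := (n:ℝ))
    (by have := Nat.cast_nonneg (α := ℝ) n; linarith)
  refine h.congr_fun (fun x hx => ?_) measurableSet_Ioi
  simp only [Real.rpow_natCast]
  ring_nf

lemma integrableOn_pow_gauss_div {B : ℝ} (hB : 0 < B) (n : ℕ) (z : ℝ) :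
    IntegrableOn (fun s : ℝ => s ^ (n+1) * Real.exp (-B * s ^ 2 / 2) / Real.sqrt (s^2 + z^2))
      (Set.Ioi 0) := by
  apply Integrable.mono' (integrableOn_pow_gauss hB n)
  · apply Measurable.aestronglyMeasurable
    exact ((measurable_id.pow_const _).mul
      ((((measurable_id.pow_const 2).const_mul (-B)).div_const 2).exp)).div
      (((measurable_id.pow_const 2).add_const (z^2)).sqrt)
  · filter_upwards [ae_restrict_mem measurableSet_Ioi] with x hx
    have hx0 : 0 < x := hx
    have hs : x ≤ Real.sqrt (x^2+z^2) := by
      have h1 : Real.sqrt (x^2) ≤ Real.sqrt (x^2+z^2) := Real.sqrt_le_sqrt (by nlinarith)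
      rwa [Real.sqrt_sq hx0.le] at h1
    have hnum : 0 ≤ x ^ (n+1) * Real.exp (-B * x ^ 2 / 2) :=
      mul_nonneg (pow_nonneg hx0.le _) (Real.exp_pos _).le
    rw [Real.norm_eq_abs, abs_of_nonneg (div_nonneg hnum (Real.sqrt_nonneg _))]
    calc x ^ (n+1) * Real.exp (-B * x ^ 2 / 2) / Real.sqrt (x^2+z^2)
        ≤ x ^ (n+1) * Real.exp (-B * x ^ 2 / 2) / x :=
          div_le_div_of_nonneg_left hnum hx0 hs
      _ = x ^ n * Real.exp (-B * x ^ 2 / 2) := by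
          rw [pow_succ]; field_simp

theorem aLandau_antitone' (B : ℝ) (hB : 0 < B) (n : ℕ) (z : ℝ) :
    (B ^ ((n+1) + 1) / (2 ^ (n+1) * (Nat.factorial (n+1)))) *
      ∫ s in Set.Ioi (0 : ℝ), s ^ (2 * (n+1) + 1) * Real.exp (-B * s ^ 2 / 2) /
        Real.sqrt (s ^ 2 + z ^ 2)
    ≤ (B ^ (n + 1) / (2 ^ n * (Nat.factorial n))) *
      ∫ s in Set.Ioi (0 : ℝ), s ^ (2 * n + 1) * Real.exp (-B * s ^ 2 / 2) /
        Real.sqrt (s ^ 2 + z ^ 2) := by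
  set c : ℕ → ℝ := fun k => B ^ (k+1) / (2 ^ k * (Nat.factorial k)) with hc
  have hcpos : ∀ k, 0 < c k := fun k => by
    have : (0:ℝ) < Nat.factorial k := by exact_mod_cast Nat.factorial_pos k
    positivity
  have hcI : ∀ k, c k * (2 ^ k * (Nat.factorial k) / B ^ (k+1)) = 1 := by
    intro k
    have h1 : (B:ℝ) ^ (k+1) ≠ 0 := by positivity
    have h2 : (0:ℝ) < Nat.factorial k := by exact_mod_cast Nat.factorial_pos k
    field_simp [hc]
    simp only [hc]; field_simp
  have hcrel : c (n+1) = c n * (B / (2*((n:ℝ)+1))) := by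
    have h2 : (0:ℝ) < Nat.factorial n := by exact_mod_cast Nat.factorial_pos n
    simp only [hc, pow_succ, Nat.factorial_succ]
    push_cast
    field_simp
  set M := Real.sqrt (2*((n:ℝ)+1)/B + z^2) with hM
  have hMpos : 0 < M := Real.sqrt_pos.2 (by positivity)
  set P : ℝ → ℝ := fun s => c n * (s ^ (2*n+1) * Real.exp (-B*s^2/2))
      - c (n+1) * (s ^ (2*(n+1)+1) * Real.exp (-B*s^2/2)) with hP
  -- integrability facts
  have hIf : IntegrableOn
      (fun s : ℝ => s ^ (2*n+1) * Real.exp (-B * s ^ 2 / 2) / Real.sqrt (s^2 + z^2))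
      (Set.Ioi 0) := integrableOn_pow_gauss_div hB (2*n) z
  have hIg : IntegrableOn
      (fun s : ℝ => s ^ (2*(n+1)+1) * Real.exp (-B * s ^ 2 / 2) / Real.sqrt (s^2 + z^2))
      (Set.Ioi 0) := by
    have h := integrableOn_pow_gauss_div hB (2*n+2) z
    have he : 2*(n+1)+1 = (2*n+2)+1 := by ring
    rw [he]; exact h
  have hIP : IntegrableOn P (Set.Ioi 0) := by
    exact (((integrableOn_pow_gauss hB (2*n+1)).const_mul (c n)).sub
      ((integrableOn_pow_gauss hB (2*(n+1)+1)).const_mul (c (n+1))))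
  -- integral of P is zero
  have hIPzero : (∫ s in Set.Ioi (0:ℝ), P s) = 0 := by
    simp only [hP]
    rw [integral_sub ((integrableOn_pow_gauss hB (2*n+1)).const_mul (c n))
      ((integrableOn_pow_gauss hB (2*(n+1)+1)).const_mul (c (n+1))),
      integral_const_mul, integral_const_mul,
      integral_odd_pow_gauss hB n, integral_odd_pow_gauss hB (n+1)]
    have := hcI n
    have := hcI (n+1)
    linarith
  -- pointwise inequality
  have hpt : ∀ s ∈ Set.Ioi (0:ℝ),
      P s / M + c (n+1) * (s ^ (2*(n+1)+1) * Real.exp (-B*s^2/2) / Real.sqrt (s^2+z^2))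
        ≤ c n * (s ^ (2*n+1) * Real.exp (-B*s^2/2) / Real.sqrt (s^2+z^2)) := by
    intro s hs
    have hs0 : 0 < s := hs
    have hr : 0 < Real.sqrt (s^2+z^2) :=
      Real.sqrt_pos.2 (by positivity)
    have hEq : c n * (s ^ (2*n+1) * Real.exp (-B*s^2/2) / Real.sqrt (s^2+z^2))
        - c (n+1) * (s ^ (2*(n+1)+1) * Real.exp (-B*s^2/2) / Real.sqrt (s^2+z^2))
        = P s / Real.sqrt (s^2+z^2) := by
      simp only [hP, ← mul_div_assoc, ← sub_div]
    have hfac : P s = ((c n * s ^ (2*n+1)) * Real.exp (-B*s^2/2)) *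
        ((B/(2*((n:ℝ)+1))) * (2*((n:ℝ)+1)/B - s^2)) := by
      simp only [hP, hcrel]
      have hB0 : B ≠ 0 := hB.ne'
      have hn0 : (2*((n:ℝ)+1)) ≠ 0 := by positivity
      field_simp
      ring
    have hgoal : P s / M ≤ P s / Real.sqrt (s^2+z^2) := by
      rcases le_or_gt (s^2) (2*((n:ℝ)+1)/B) with h | h
      · have hPn : 0 ≤ P s := by
          rw [hfac]
          exact mul_nonneg (mul_nonneg (mul_nonneg (hcpos n).le (pow_nonneg hs0.le _))
            (Real.exp_pos _).le) (mul_nonneg (by positivity) (by linarith))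
        have hrM : Real.sqrt (s^2+z^2) ≤ M := Real.sqrt_le_sqrt (by linarith)
        exact div_le_div_of_nonneg_left hPn hr hrM
      · have hPn : P s ≤ 0 := by
          rw [hfac]
          exact mul_nonpos_of_nonneg_of_nonpos
            (mul_nonneg (mul_nonneg (hcpos n).le (pow_nonneg hs0.le _)) (Real.exp_pos _).le)
            (mul_nonpos_of_nonneg_of_nonpos (by positivity) (by linarith))
        have hMr : M ≤ Real.sqrt (s^2+z^2) := Real.sqrt_le_sqrt (by linarith)
        have h2 := div_le_div_of_nonneg_left (neg_nonneg.2 hPn) hMpos hMr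
        rw [neg_div, neg_div] at h2
        linarith
    linarith
  -- integrate the inequality
  have hInt1 : IntegrableOn (fun s : ℝ => P s / M
      + c (n+1) * (s ^ (2*(n+1)+1) * Real.exp (-B*s^2/2) / Real.sqrt (s^2+z^2)))
      (Set.Ioi 0) := (hIP.div_const M).add (hIg.const_mul _)
  have hInt2 : IntegrableOn (fun s : ℝ =>
      c n * (s ^ (2*n+1) * Real.exp (-B*s^2/2) / Real.sqrt (s^2+z^2)))
      (Set.Ioi 0) := hIf.const_mul _
  have key := setIntegral_mono_on hInt1 hInt2 measurableSet_Ioi hpt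
  rw [integral_add (hIP.div_const M) (hIg.const_mul _), integral_div, hIPzero, zero_div,
    zero_add, integral_const_mul, integral_const_mul] at key
  exact key

noncomputable def aLandau (B : ℝ) (ℓ : ℕ) (z : ℝ) : ℝ :=
  (B ^ (ℓ + 1) / (2 ^ ℓ * (Nat.factorial ℓ))) *
    ∫ s in Set.Ioi (0 : ℝ), s ^ (2 * ℓ + 1) * Real.exp (-B * s ^ 2 / 2) /
      Real.sqrt (s ^ 2 + z ^ 2)

theorem aLandau_antitone (B : ℝ) (hB : 0 < B) (ℓ : ℕ) (hℓ : 1 ≤ ℓ) (z : ℝ) :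
    aLandau B ℓ z ≤ aLandau B (ℓ - 1) z := by
  obtain ⟨n, rfl⟩ : ∃ n, ℓ = n + 1 := ⟨ℓ - 1, (Nat.succ_pred_eq_of_pos hℓ).symm⟩
  simp only [Nat.add_sub_cancel, aLandau]
  exact aLandau_antitone' B hB n z
end
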